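/- Let m ∈ ℕ and let A = ℂ^{m×m} be the C*-algebra of m×m complex matrices with the operator norm. Let M be a Banach A-module, let M₀ be a closed A-submodule of M, and let u₁ ∈ M with u₁ ∉ M₀. Then there exists a bounded A-linear map f : M → A such that f(u) = 0 for all u ∈ M₀ and f(u₁) ≠ 0. -/

import Mathlib

open scoped Matrix.Norms.L2Operator

/-- A Banach module over the C*-algebra `A = ℂ^{m×m}` of `m × m` complex matrices with the
operator norm: a complex Banach space `M` with a right `A`-module structure satisfying
`‖u·c‖ ≤ ‖u‖ ‖c‖`, compatibly with the complex scalar actions. -/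
structure BanachMatrixModule (m : ℕ) (M : Type*) [NormedAddCommGroup M] [NormedSpace ℂ M] where
  smul : M → Matrix (Fin m) (Fin m) ℂ → M
  add_smul : ∀ (u v : M) (c : Matrix (Fin m) (Fin m) ℂ), smul (u + v) c = smul u c + smul v c
  smul_add : ∀ (u : M) (c d : Matrix (Fin m) (Fin m) ℂ), smul u (c + d) = smul u c + smul u d
  smul_mul : ∀ (u : M) (c d : Matrix (Fin m) (Fin m) ℂ), smul u (c * d) = smul (smul u c) d
  smul_one : ∀ u : M, smul u 1 = u
  smul_complex : ∀ (α : ℂ) (u : M) (c : Matrix (Fin m) (Fin m) ℂ),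
    smul u (α • c) = α • smul u c
  norm_smul_le : ∀ (u : M) (c : Matrix (Fin m) (Fin m) ℂ), ‖smul u c‖ ≤ ‖u‖ * ‖c‖

/-- For a fixed `u`, the action `c ↦ B.smul u c` as a `ℂ`-linear map. -/
def BanachMatrixModule.smulL {m : ℕ} {M : Type*} [NormedAddCommGroup M] [NormedSpace ℂ M]
    (B : BanachMatrixModule m M) (u : M) : Matrix (Fin m) (Fin m) ℂ →ₗ[ℂ] M where
  toFun c := B.smul u c
  map_add' := B.smul_add u
  map_smul' α c := B.smul_complex α u c

lemma BanachMatrixModule.complex_smul {m : ℕ} {M : Type*} [NormedAddCommGroup M]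
    [NormedSpace ℂ M] (B : BanachMatrixModule m M) (α : ℂ) (u : M)
    (c : Matrix (Fin m) (Fin m) ℂ) : B.smul (α • u) c = α • B.smul u c := by
  have h1 : α • u = B.smul u (α • 1) := by rw [B.smul_complex, B.smul_one]
  rw [h1, ← B.smul_mul, Algebra.smul_mul_assoc, one_mul, B.smul_complex]

/-- **Hahn–Banach-type separation for Banach modules over matrix algebras.** If `M₀` is a
closed `A`-submodule of a Banach `A`-module `M` (`A = ℂ^{m×m}` with the operator norm) and
`u₁ ∉ M₀`, then there is a bounded `A`-linear map `f : M → A` vanishing on `M₀` with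
`f u₁ ≠ 0`. -/
theorem separation_banach_matrix_module {m : ℕ} {M : Type*}
    [NormedAddCommGroup M] [NormedSpace ℂ M] [CompleteSpace M]
    (B : BanachMatrixModule m M)
    (M₀ : Set M) (h_closed : IsClosed M₀) (h_zero : (0 : M) ∈ M₀)
    (h_add : ∀ u ∈ M₀, ∀ v ∈ M₀, u + v ∈ M₀)
    (h_smul : ∀ u ∈ M₀, ∀ c : Matrix (Fin m) (Fin m) ℂ, B.smul u c ∈ M₀)
    (u₁ : M) (hu₁ : u₁ ∉ M₀) :
    ∃ f : M → Matrix (Fin m) (Fin m) ℂ,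
      (∀ u v : M, f (u + v) = f u + f v) ∧
      (∀ (α : ℂ) (u : M), f (α • u) = α • f u) ∧
      (∀ (u : M) (c : Matrix (Fin m) (Fin m) ℂ), f (B.smul u c) = f u * c) ∧
      (∃ C : ℝ, ∀ u : M, ‖f u‖ ≤ C * ‖u‖) ∧
      (∀ u ∈ M₀, f u = 0) ∧
      f u₁ ≠ 0 := by
  classical
  -- M₀ as a closed ℂ-submodule
  let p : Submodule ℂ M :=
    { carrier := M₀
      add_mem' := fun {a b} ha hb => h_add a ha b hb
      zero_mem' := h_zero
      smul_mem' := fun α u hu => by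
        have h1 : α • u = B.smul u (α • 1) := by rw [B.smul_complex, B.smul_one]
        rw [h1]; exact h_smul u hu _ }
  haveI : IsClosed (p : Set M) := h_closed
  -- the image of u₁ in the quotient is nonzero
  have hq : (Submodule.Quotient.mk u₁ : M ⧸ p) ≠ 0 := by
    rw [Ne, Submodule.Quotient.mk_eq_zero]; exact hu₁
  obtain ⟨g, hg1, hg2⟩ := exists_dual_vector ℂ (Submodule.Quotient.mk u₁ : M ⧸ p) (norm_ne_zero_iff.mpr hq)
  -- φ : M →L[ℂ] ℂ vanishing on M₀ with φ u₁ ≠ 0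
  let φ : M →L[ℂ] ℂ := g.comp (p.mkQ.mkContinuous 1 (by
    intro x; simpa using Submodule.Quotient.norm_mk_le p x))
  have hφ0 : ∀ u ∈ M₀, φ u = 0 := by
    intro u hu
    have : (Submodule.Quotient.mk u : M ⧸ p) = 0 := (Submodule.Quotient.mk_eq_zero p).2 hu
    show g (Submodule.Quotient.mk u) = 0
    rw [this, map_zero]
  have hφ1 : φ u₁ ≠ 0 := by
    have : φ u₁ = ‖(Submodule.Quotient.mk u₁ : M ⧸ p)‖ := hg2
    rw [this]
    exact_mod_cast norm_ne_zero_iff.mpr hq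
  -- define f
  set E : Fin m → Fin m → Matrix (Fin m) (Fin m) ℂ :=
    fun i j => Matrix.single i j 1 with hE
  let f : M → Matrix (Fin m) (Fin m) ℂ :=
    fun u => Matrix.of fun i j => φ (B.smul u (E j i))
  have hf_apply : ∀ u i j, f u i j = φ (B.smul u (E j i)) := fun _ _ _ => rfl
  refine ⟨f, ?_, ?_, ?_, ?_, ?_, ?_⟩
  · intro u v
    ext i j
    simp [hf_apply, B.add_smul, Matrix.add_apply]
  · intro α u
    ext i j
    simp [hf_apply, B.complex_smul, Matrix.smul_apply, smul_eq_mul]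
  · -- A-linearity
    intro u c
    ext i j
    have key : c * E j i = ∑ k : Fin m, c k j • E k i := by
      ext a b
      simp [hE, Matrix.mul_apply, Matrix.single, Matrix.sum_apply, Finset.mul_sum,
        mul_ite, mul_one, mul_zero, ite_and, eq_comm]
    calc f (B.smul u c) i j = φ (B.smulL u (c * E j i)) := by
          rw [hf_apply]
          congr 1
          exact (B.smul_mul u c (E j i)).symm
      _ = φ (∑ k : Fin m, c k j • B.smulL u (E k i)) := by
          rw [key, map_sum]
          simp [BanachMatrixModule.smulL]
      _ = ∑ k : Fin m, f u i k * c k j := by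
          rw [map_sum]
          refine Finset.sum_congr rfl fun k _ => ?_
          simp [hf_apply, BanachMatrixModule.smulL, mul_comm]
      _ = (f u * c) i j := (Matrix.mul_apply).symm
  · -- boundedness
    refine ⟨∑ i : Fin m, ∑ j : Fin m, ‖φ‖ * ‖E j i‖ * ‖E i j‖, fun u => ?_⟩
    have hrep : f u = ∑ i : Fin m, ∑ j : Fin m, f u i j • E i j := by
      conv_lhs => rw [Matrix.matrix_eq_sum_single (f u)]
      refine Finset.sum_congr rfl fun i _ => Finset.sum_congr rfl fun j _ => ?_
      rw [hE]
      ext a b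
      simp [Matrix.single, Matrix.smul_apply]
    calc ‖f u‖ = ‖∑ i : Fin m, ∑ j : Fin m, f u i j • E i j‖ := by rw [← hrep]
      _ ≤ ∑ i : Fin m, ∑ j : Fin m, ‖f u i j • E i j‖ := by
          refine (norm_sum_le _ _).trans (Finset.sum_le_sum fun i _ => norm_sum_le _ _)
      _ ≤ ∑ i : Fin m, ∑ j : Fin m, (‖φ‖ * ‖E j i‖ * ‖E i j‖) * ‖u‖ := by
          refine Finset.sum_le_sum fun i _ => Finset.sum_le_sum fun j _ => ?_
          rw [norm_smul]
          have h1 : ‖f u i j‖ ≤ ‖φ‖ * (‖u‖ * ‖E j i‖) := by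
            rw [hf_apply]
            exact (φ.le_opNorm _).trans (by
              have := B.norm_smul_le u (E j i)
              exact mul_le_mul_of_nonneg_left this (norm_nonneg φ))
          calc ‖f u i j‖ * ‖E i j‖ ≤ (‖φ‖ * (‖u‖ * ‖E j i‖)) * ‖E i j‖ :=
                mul_le_mul_of_nonneg_right h1 (norm_nonneg _)
            _ = (‖φ‖ * ‖E j i‖ * ‖E i j‖) * ‖u‖ := by ring
      _ = (∑ i : Fin m, ∑ j : Fin m, ‖φ‖ * ‖E j i‖ * ‖E i j‖) * ‖u‖ := by
          rw [Finset.sum_mul]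
          exact Finset.sum_congr rfl fun i _ => (Finset.sum_mul _ _ _).symm
  · intro u hu
    ext i j
    simp [hf_apply, hφ0 _ (h_smul u hu _)]
  · -- f u₁ ≠ 0
    intro hzero
    have hsum : ∑ i : Fin m, φ (B.smul u₁ (E i i)) = φ u₁ := by
      have h1 : (1 : Matrix (Fin m) (Fin m) ℂ) = ∑ i : Fin m, E i i := by
        ext a b
        by_cases h : a = b
        · subst h
          simp [hE, Matrix.single, Matrix.sum_apply, Matrix.one_apply, eq_comm]
        · simp only [hE, Matrix.single, Matrix.sum_apply, Matrix.one_apply, h,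
            if_false, Matrix.of_apply]
          symm
          refine Finset.sum_eq_zero fun x _ => ?_
          rw [if_neg]
          rintro ⟨rfl, rfl⟩
          exact h rfl
      calc ∑ i : Fin m, φ (B.smul u₁ (E i i)) = φ (B.smulL u₁ (∑ i : Fin m, E i i)) := by
            rw [map_sum (B.smulL u₁)]
            exact (map_sum φ _ _).symm
        _ = φ u₁ := by
            simp only [BanachMatrixModule.smulL, LinearMap.coe_mk, AddHom.coe_mk]
            rw [← h1, B.smul_one]
    apply hφ1
    rw [← hsum]
    refine Finset.sum_eq_zero fun i _ => ?_
    have : f u₁ i i = 0 := by rw [hzero]; rfl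
    rwa [hf_apply] at this
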